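/- Let 1 ≤ j ≤ m+1 and let v = D(v₁,…,v_{j−1},v_j,∅,…,∅) be an m-Dyck path with v_j ≠ ∅. Then v can be written in a unique way as v = v' * v'', where v' is of the form D(v'₁,…,v'_{j−1}, v'_j·1·0^m, ∅,…,∅) for some (possibly empty) m-Dyck paths v'₁,…,v'_j, and v'' is a prime m-Dyck path. -/

import Mathlib

/-! Words over `Bool` encode lattice paths: `true` = up step (letter 1),
`false` = down step (letter 0). -/

/-- `w` is an `m`-Dyck word: the number of 0's is `m` times the number of 1's,
and every prefix `p` satisfies `m·|p|₁ ≥ |p|₀`.  (The empty word is allowed;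
an `m`-Dyck path of size `n` is an `m`-Dyck word with `n` letters 1.) -/
def IsDyck (m : ℕ) (w : List Bool) : Prop :=
  w.count false = m * w.count true ∧
  ∀ p : List Bool, p <+: w → p.count false ≤ m * p.count true

/-- Cover relation of the greedy `m`-Tamari order: swap a valley's down step with
the *longest* Dyck factor that follows it. -/
def GreedyCover (m : ℕ) (w w' : List Bool) : Prop :=
  ∃ u d v : List Bool, d ≠ [] ∧ IsDyck m d ∧
    w = u ++ false :: (d ++ v) ∧
    w' = u ++ d ++ false :: v ∧
    ∀ d' : List Bool, d' <+: d ++ v → IsDyck m d' → d'.length ≤ d.length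

/-- The greedy `m`-Tamari order (reflexive-transitive closure of the cover relation). -/
def GreedyLe (m : ℕ) : List Bool → List Bool → Prop :=
  Relation.ReflTransGen (GreedyCover m)

/-- Cover relation of the ordinary `m`-Tamari order: swap a valley's down step with
the *shortest nonempty* Dyck factor that follows it. -/
def OrdCover (m : ℕ) (w w' : List Bool) : Prop :=
  ∃ u d v : List Bool, d ≠ [] ∧ IsDyck m d ∧
    w = u ++ false :: (d ++ v) ∧
    w' = u ++ d ++ false :: v ∧
    ∀ d' : List Bool, d' <+: d ++ v → IsDyck m d' → d' ≠ [] → d.length ≤ d'.length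

/-- The ordinary `m`-Tamari order. -/
def OrdLe (m : ℕ) : List Bool → List Bool → Prop :=
  Relation.ReflTransGen (OrdCover m)

/-- The word `1·0^m` (a single peak), unit of the monoid `(D_m, *)`. -/
def peakWord (m : ℕ) : List Bool := true :: List.replicate m false

/-- Length of the final descent: the longest suffix of the form `0^k`. -/
def finalDescent (w : List Bool) : ℕ := (w.reverse.takeWhile (fun b => !b)).length

/-- The product `w₁ * w₂` on nonempty `m`-Dyck words: replace the rightmost peak
(the last up step together with the `m` down steps following it) of `w₁` by `w₂`. -/
def star (m : ℕ) (w₁ w₂ : List Bool) : List Bool :=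
  w₁.take (w₁.length - (finalDescent w₁ + 1)) ++ w₂ ++
    List.replicate (finalDescent w₁ - m) false

/-- Delete the last peak (the last up step and the `m` down steps following it). -/
def delPeak (m : ℕ) (w : List Bool) : List Bool :=
  w.take (w.length - (finalDescent w + 1)) ++ List.replicate (finalDescent w - m) false

/-- `D(w₀, …, w_m) = 1 (w₀ 0) (w₁ 0) ⋯ (w_{m-1} 0) w_m` : the canonical
decomposition of nonempty `m`-Dyck words (components indexed by `Fin (m+1)`). -/
def Dpath (m : ℕ) (ws : Fin (m+1) → List Bool) : List Bool :=
  true :: ((List.ofFn fun j : Fin m => ws j.castSucc ++ [false]).flatten ++ ws (Fin.last m))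

/-- Generators of the free monoid `(D_m, *)` : the words
`D(w₁,…,w_{i−1}, 1·0^m, ∅,…,∅)` with Dyck (possibly empty) components before
position `i`. -/
def IsGenerator (m : ℕ) (g : List Bool) : Prop :=
  ∃ i : Fin (m+1), ∃ ws : Fin (m+1) → List Bool,
    (∀ j, IsDyck m (ws j)) ∧ ws i = peakWord m ∧
    (∀ j : Fin (m+1), i < j → ws j = []) ∧ g = Dpath m ws

/-- A prime (no contact) nonempty `m`-Dyck word: no proper nonempty prefix `p`
satisfies `m·|p|₁ = |p|₀`. -/
def IsPrimePath (m : ℕ) (w : List Bool) : Prop :=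
  IsDyck m w ∧ w ≠ [] ∧
  ∀ p : List Bool, p <+: w → p ≠ [] → p ≠ w → p.count false ≠ m * p.count true

namespace PF


lemma dyck_nil (m : ℕ) : IsDyck m [] := by
  constructor
  · simp
  · intro p hp; rw [List.prefix_nil] at hp; simp [hp]

lemma prefix_append_cases {α : Type*} {r x y : List α} (h : r <+: x ++ y) :
    r <+: x ∨ ∃ s, s <+: y ∧ r = x ++ s := by
  by_cases hl : r.length ≤ x.length
  · exact Or.inl (List.prefix_of_prefix_length_le h (List.prefix_append x y) hl)
  · right
    have hx : x <+: r := List.prefix_of_prefix_length_le (List.prefix_append x y) h (le_of_lt (not_le.mp hl))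
    obtain ⟨s, rfl⟩ := hx
    refine ⟨s, ?_, rfl⟩
    obtain ⟨t, ht⟩ := h
    rw [List.append_assoc] at ht
    exact ⟨t, (List.append_cancel_left ht)⟩

lemma dyck_append {m : ℕ} {u v : List Bool} (hu : IsDyck m u) (hv : IsDyck m v) :
    IsDyck m (u ++ v) := by
  constructor
  · simp [List.count_append, hu.1, hv.1, Nat.mul_add]
  · intro p hp
    rcases prefix_append_cases hp with h | ⟨s, hs, rfl⟩
    · exact hu.2 p h
    · have := hv.2 s hs
      simp only [List.count_append, hu.1, Nat.mul_add]
      omega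

lemma dyck_peak (m : ℕ) : IsDyck m (peakWord m) := by
  constructor
  · simp [peakWord, List.count_replicate]
  · intro p hp
    match p, hp with
    | [], _ => simp
    | b :: q, hp =>
      rw [show peakWord m = true :: List.replicate m false from rfl,
        List.cons_prefix_cons] at hp
      obtain ⟨rfl, hq⟩ := hp
      have h1 : q.count false ≤ (List.replicate m false).count false :=
        hq.sublist.count_le false
      simp [List.count_replicate] at h1 ⊢
      have h2 : m * (q.count true + 1) = m * q.count true + m := by ring
      omega

lemma takeWhile_rep {k : ℕ} (z : List Bool) :
    (List.replicate k false ++ true :: z).takeWhile (fun b => !b) = List.replicate k false := by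
  induction k with
  | zero => simp [List.takeWhile]
  | succ n ih => simp [List.replicate_succ, List.takeWhile, ih]

lemma finalDescent_eval (y : List Bool) (k : ℕ) :
    finalDescent (y ++ true :: List.replicate k false) = k := by
  have : (y ++ true :: List.replicate k false).reverse
      = List.replicate k false ++ true :: y.reverse := by
    simp [List.reverse_append]
  rw [finalDescent, this, takeWhile_rep]
  simp

lemma star_eval (m : ℕ) (x w : List Bool) (k : ℕ) (hk : m ≤ k) :
    star m (x ++ true :: List.replicate k false) w = x ++ w ++ List.replicate (k - m) false := by
  unfold _root_.star
  rw [finalDescent_eval]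
  have hl : (x ++ true :: List.replicate k false).length - (k + 1) = x.length := by
    simp
  rw [hl, List.take_left]




/-- block hypothesis -/
def BlockHyp (m : ℕ) (Bs : List (List Bool)) : Prop :=
  ∀ B ∈ Bs, ∃ D, IsDyck m D ∧ B = D ++ [false]

lemma F1 {m : ℕ} {Bs : List (List Bool)} (h : BlockHyp m Bs) :
    Bs.flatten.count false = Bs.length + m * Bs.flatten.count true := by
  induction Bs with
  | nil => simp
  | cons B rest ih =>
    obtain ⟨D, hD, rfl⟩ := h B List.mem_cons_self
    have hrest := ih (fun B hB => h B (List.mem_cons_of_mem _ hB))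
    simp [List.count_append, hD.1, hrest]
    ring

lemma F2 {m : ℕ} {Bs : List (List Bool)} (h : BlockHyp m Bs) :
    ∀ r : List Bool, r <+: Bs.flatten → r ≠ Bs.flatten →
      r.count false + 1 ≤ m * r.count true + Bs.length := by
  induction Bs with
  | nil => intro r hr hne; rw [List.flatten_nil, List.prefix_nil] at hr; exact absurd hr hne
  | cons B rest ih =>
    intro r hr hne
    obtain ⟨D, hD, rfl⟩ := h B List.mem_cons_self
    rw [List.flatten_cons] at hr hne
    rcases prefix_append_cases hr with hrB | ⟨s, hs, rfl⟩
    · rcases prefix_append_cases hrB with hrD | ⟨s, hs, rfl⟩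
      · have := hD.2 r hrD
        simp [List.length_cons]
        omega
      · -- r = D ++ s with s <+: [false]
        have hcases : s = [] ∨ s = [false] := by
          cases s with
          | nil => exact Or.inl rfl
          | cons a s' =>
            obtain ⟨t, ht⟩ := hs
            simp only [List.cons_append, List.cons.injEq] at ht
            obtain ⟨rfl, ht2⟩ := ht
            obtain ⟨rfl, -⟩ := List.append_eq_nil_iff.mp ht2
            exact Or.inr rfl
        rcases hcases with rfl | rfl
        · simp [List.count_append, hD.1, List.length_cons]
        · by_cases hrest0 : rest = []
          · exact absurd (by subst hrest0; simp) hne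
          · have h1 : 1 ≤ rest.length := List.length_pos_iff.mpr hrest0
            simp [List.count_append, hD.1, List.length_cons]
            omega
    · have hrest := ih (fun B hB => h B (List.mem_cons_of_mem _ hB))
      by_cases hsf : s = rest.flatten
      · exact absurd (by rw [hsf]) hne
      · have := hrest s hs hsf
        have hD1 : (D.count false) = m * D.count true := hD.1
        simp [List.count_append, List.length_cons, Nat.mul_add, hD1]
        omega




/-- Extend components to ℕ. -/
def Wext (m : ℕ) (ws : Fin (m+1) → List Bool) : ℕ → List Bool :=
  fun k => if h : k < m + 1 then ws ⟨k, h⟩ else []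

/-- Prefix before component `jn`. -/
def preD (m : ℕ) (ws : Fin (m+1) → List Bool) (jn : ℕ) : List Bool :=
  true :: ((List.range jn).map (fun k => Wext m ws k ++ [false])).flatten

lemma ofFn_eq (m : ℕ) (ws : Fin (m+1) → List Bool) :
    (List.ofFn fun j : Fin m => ws j.castSucc ++ [false])
      = (List.range m).map (fun k => Wext m ws k ++ [false]) := by
  apply List.ext_getElem
  · simp
  · intro i h1 h2
    have him : i < m := by simpa using h1
    simp [Wext, Fin.castSucc, Fin.castAdd, Fin.castLE, Nat.lt_succ_of_lt him]
    intro h; omega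

lemma flatten_stable (g : ℕ → List Bool) (t M : ℕ) (ht : t ≤ M)
    (hg : ∀ k, t ≤ k → g k = [false]) :
    ((List.range M).map g).flatten
      = ((List.range t).map g).flatten ++ List.replicate (M - t) false := by
  obtain ⟨d, rfl⟩ := Nat.exists_eq_add_of_le ht
  induction d with
  | zero => simp
  | succ n ih =>
    rw [show t + (n+1) = (t+n) + 1 from rfl, List.range_succ, List.map_append,
      List.flatten_append, ih (by omega)]
    rw [show t + n + 1 - t = n + 1 from by omega, show t + n - t = n from by omega]
    simp [hg (t+n) (by omega), List.replicate_succ']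

/-- The key decomposition of `Dpath`. -/
lemma Dpath_decomp (m : ℕ) (j : Fin (m+1)) (ws : Fin (m+1) → List Bool)
    (hempty : ∀ k : Fin (m + 1), j < k → ws k = []) :
    Dpath m ws = preD m ws j.val ++ ws j ++ List.replicate (m - j.val) false := by
  have hj : j.val ≤ m := Nat.le_of_lt_succ j.2
  rw [Dpath, ofFn_eq, preD]
  by_cases hjm : j.val = m
  · have hlast : Fin.last m = j := by
      apply Fin.ext; simp [hjm]
    rw [hlast, hjm]
    simp
  · have hjlt : j.val < m := lt_of_le_of_ne hj hjm
    have hlast : ws (Fin.last m) = [] := by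
      apply hempty; exact (by simp [Fin.lt_def, Fin.last]; omega)
    have hsplit := flatten_stable (fun k => Wext m ws k ++ [false]) (j.val + 1) m
      (by omega) (fun k hk => by
        have hk1 : Wext m ws k = [] := by
          unfold Wext
          split
          · next h => exact hempty ⟨k, h⟩ (by simp [Fin.lt_def]; omega)
          · rfl
        simp [hk1])
    rw [hsplit, List.range_succ, List.map_append, List.flatten_append]
    have hWj : Wext m ws j.val = ws j := by simp [Wext]; intro h; omega
    simp only [List.map_cons, List.map_nil, List.flatten_cons, List.flatten_nil, hWj, hlast]
    simp only [List.append_nil, List.append_assoc]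
    congr 2
    rw [show m - j.val = (m - (j.val+1)) + 1 from by omega, List.replicate_succ]
    simp

end PF
namespace PF

lemma preD_blockHyp (m : ℕ) (ws : Fin (m+1) → List Bool) (hd : ∀ k, IsDyck m (ws k)) (jn : ℕ) :
    BlockHyp m ((List.range jn).map (fun k => Wext m ws k ++ [false])) := by
  intro B hB
  simp only [List.mem_map] at hB
  obtain ⟨k, -, rfl⟩ := hB
  refine ⟨Wext m ws k, ?_, rfl⟩
  unfold Wext
  split
  · exact hd _
  · exact dyck_nil m

lemma preD_ne (m : ℕ) (ws : Fin (m+1) → List Bool) (jn : ℕ) : preD m ws jn ≠ [] := by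
  simp [preD]

lemma preD_count (m : ℕ) (ws : Fin (m+1) → List Bool) (hd : ∀ k, IsDyck m (ws k))
    {jn : ℕ} (hj : jn ≤ m) :
    (preD m ws jn).count false + (m - jn) = m * (preD m ws jn).count true := by
  have h1 := F1 (preD_blockHyp m ws hd jn)
  simp only [preD, List.count_cons]
  simp only [List.length_map, List.length_range] at h1
  rw [h1]
  simp [Nat.mul_add]
  omega

lemma preD_strict (m : ℕ) (ws : Fin (m+1) → List Bool) (hd : ∀ k, IsDyck m (ws k))
    {jn : ℕ} (hj : jn ≤ m) :
    ∀ q : List Bool, q <+: preD m ws jn → q ≠ [] → q ≠ preD m ws jn →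
      q.count false + (m - jn) < m * q.count true := by
  intro q hq hqne hqproper
  match q, hqne with
  | b :: r, _ =>
    rw [preD, List.cons_prefix_cons] at hq
    obtain ⟨rfl, hr⟩ := hq
    have hrne : r ≠ ((List.range jn).map (fun k => Wext m ws k ++ [false])).flatten := by
      intro hcon; exact hqproper (by rw [preD, hcon])
    have h2 := F2 (preD_blockHyp m ws hd jn) r hr hrne
    simp only [List.length_map, List.length_range] at h2
    simp only [List.count_cons]
    simp [Nat.mul_add]
    omega

/-- The cancellation lemma for the `preD`-part. -/
lemma cancel_pre (m : ℕ) {jn : ℕ} {P₁ P₂ X₁ X₂ : List Bool}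
    (heq : P₁ ++ X₁ = P₂ ++ X₂)
    (hne₁ : P₁ ≠ []) (hne₂ : P₂ ≠ [])
    (ha₁ : P₁.count false + (m - jn) = m * P₁.count true)
    (ha₂ : P₂.count false + (m - jn) = m * P₂.count true)
    (hb₁ : ∀ q : List Bool, q <+: P₁ → q ≠ [] → q ≠ P₁ → q.count false + (m - jn) < m * q.count true)
    (hb₂ : ∀ q : List Bool, q <+: P₂ → q ≠ [] → q ≠ P₂ → q.count false + (m - jn) < m * q.count true) :
    P₁ = P₂ ∧ X₁ = X₂ := by
  have hP : P₁ = P₂ := by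
    rcases le_total P₁.length P₂.length with hl | hl
    · have h12 : P₁ <+: P₂ :=
        List.prefix_of_prefix_length_le ⟨X₁, heq⟩ (heq ▸ List.prefix_append P₂ X₂) hl
      by_contra hcon
      have := hb₂ P₁ h12 hne₁ hcon
      omega
    · have h21 : P₂ <+: P₁ :=
        List.prefix_of_prefix_length_le (heq ▸ List.prefix_append P₂ X₂) ⟨X₁, heq⟩ hl
      by_contra hcon
      have := hb₁ P₂ h21 hne₂ (fun h => hcon h.symm)
      omega
  subst hP
  exact ⟨rfl, List.append_cancel_left heq⟩

/-- `preD` depends only on components below `jn`. -/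
lemma preD_congr (m : ℕ) (ws ws' : Fin (m+1) → List Bool) {jn : ℕ} (hj : jn ≤ m)
    (h : ∀ k : Fin (m+1), k.val < jn → ws k = ws' k) :
    preD m ws jn = preD m ws' jn := by
  unfold preD
  congr 1
  apply congrArg List.flatten
  apply List.map_congr_left
  intro k hk
  have hk' : k < jn := List.mem_range.mp hk
  have hkm : k < m + 1 := by omega
  simp [Wext, hkm, h ⟨k, hkm⟩ hk']

end PF

namespace PF

def IsPrimePath' (m : ℕ) (w : List Bool) : Prop :=
  IsDyck m w ∧ w ≠ [] ∧
  ∀ p : List Bool, p <+: w → p ≠ [] → p ≠ w → p.count false ≠ m * p.count true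

/-- Existence of the (Dyck, prime) split of a nonempty Dyck word. -/
lemma prime_split (m : ℕ) {w : List Bool} (hw : IsDyck m w) (hne : w ≠ []) :
    ∃ u p : List Bool, IsDyck m u ∧ IsPrimePath' m p ∧ w = u ++ p := by
  classical
  set P : ℕ → Prop := fun k => (w.take k).count false = m * (w.take k).count true with hP
  have hlen : 1 ≤ w.length := List.length_pos_iff.mpr hne
  set c := Nat.findGreatest P (w.length - 1) with hc
  have hcP : P c := Nat.findGreatest_spec (Nat.zero_le _) (by simp [hP])
  have hcle : c ≤ w.length - 1 := Nat.findGreatest_le _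
  refine ⟨w.take c, w.drop c, ?_, ?_, (List.take_append_drop c w).symm⟩
  · refine ⟨hcP, ?_⟩
    intro q hq
    exact hw.2 q (hq.trans (List.take_prefix c w))
  · have hulen : (w.take c).length = c := by
      rw [List.length_take]; omega
    have hdne : w.drop c ≠ [] := by
      intro hcon
      have := congrArg List.length hcon
      simp [List.length_drop] at this
      omega
    have hcounts : (w.take c).count false + (w.drop c).count false = w.count false ∧
        (w.take c).count true + (w.drop c).count true = w.count true := by
      constructor <;> (conv_rhs => rw [← List.take_append_drop c w]) <;> rw [List.count_append]
    have hdd : IsDyck m (w.drop c) := by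
      constructor
      · have h1 := hw.1
        have h2 : m * w.count true = m * (w.take c).count true + m * (w.drop c).count true := by
          rw [← Nat.mul_add, hcounts.2]
        omega
      · intro t ht
        have hprefix : w.take c ++ t <+: w := by
          obtain ⟨r, hr⟩ := ht
          exact ⟨r, by rw [List.append_assoc, hr, List.take_append_drop]⟩
        have := hw.2 _ hprefix
        rw [List.count_append, List.count_append, Nat.mul_add] at this
        omega
    refine ⟨hdd, hdne, ?_⟩
    intro t ht htne htproper hcount
    have hprefix : w.take c ++ t <+: w := by
      obtain ⟨r, hr⟩ := ht
      exact ⟨r, by rw [List.append_assoc, hr, List.take_append_drop]⟩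
    have hPt : P (c + t.length) := by
      have htake : w.take (c + t.length) = w.take c ++ t := by
        have h0 := (List.prefix_iff_eq_take.mp hprefix)
        rw [h0]
        congr 1
        simp [hulen]
      rw [hP]
      simp only [htake, List.count_append, hcP, Nat.mul_add]
      omega
    have htlt : t.length < (w.drop c).length := by
      have hle : t.length ≤ (w.drop c).length := List.IsPrefix.length_le ht
      rcases lt_or_eq_of_le hle with h | h
      · exact h
      · exact absurd (List.IsPrefix.eq_of_length ht h) htproper
    have hbound : c + t.length ≤ w.length - 1 := by
      rw [List.length_drop] at htlt; omega
    have := Nat.le_findGreatest hbound hPt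
    have htpos : 1 ≤ t.length := List.length_pos_iff.mpr htne
    omega

/-- Uniqueness of the (Dyck, prime) split. -/
lemma prime_split_unique_aux (m : ℕ) {u₁ u₂ p₁ p₂ : List Bool}
    (h : u₁ ++ p₁ = u₂ ++ p₂) (hu₁ : IsDyck m u₁) (hu₂ : IsDyck m u₂)
    (hp₁ : IsPrimePath' m p₁) (hp₂ : IsPrimePath' m p₂)
    (hl : u₁.length ≤ u₂.length) : u₁ = u₂ ∧ p₁ = p₂ := by
  have h12 : u₁ <+: u₂ :=
    List.prefix_of_prefix_length_le ⟨p₁, h⟩ (h ▸ List.prefix_append u₂ p₂) hl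
  obtain ⟨t, rfl⟩ := h12
  rw [List.append_assoc] at h
  have hp : p₁ = t ++ p₂ := List.append_cancel_left h
  have htp : t <+: p₁ := hp ▸ List.prefix_append t p₂
  have htcount : t.count false = m * t.count true := by
    have h1 := hu₁.1
    have h2 := hu₂.1
    rw [List.count_append, List.count_append, Nat.mul_add] at h2
    omega
  have htnil : t = [] := by
    by_contra htne
    have htproper : t ≠ p₁ := by
      intro hcon
      rw [hcon] at hp
      have hlen2 := congrArg List.length hp
      rw [List.length_append] at hlen2
      exact hp₂.2.1 (List.length_eq_zero_iff.mp (by omega))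
    exact hp₁.2.2 t htp htne htproper htcount
  subst htnil
  simp at hp ⊢
  exact hp

lemma prime_split_unique (m : ℕ) {u₁ u₂ p₁ p₂ : List Bool}
    (h : u₁ ++ p₁ = u₂ ++ p₂) (hu₁ : IsDyck m u₁) (hu₂ : IsDyck m u₂)
    (hp₁ : IsPrimePath' m p₁) (hp₂ : IsPrimePath' m p₂) : u₁ = u₂ ∧ p₁ = p₂ := by
  rcases le_total u₁.length u₂.length with hl | hl
  · exact prime_split_unique_aux m h hu₁ hu₂ hp₁ hp₂ hl
  · obtain ⟨h1, h2⟩ := prime_split_unique_aux m h.symm hu₂ hu₁ hp₂ hp₁ hl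
    exact ⟨h1.symm, h2.symm⟩

end PF

namespace PF

lemma assemble (P u : List Bool) (m jn : ℕ) :
    P ++ (u ++ peakWord m) ++ List.replicate (m - jn) false
      = (P ++ u) ++ true :: List.replicate (m + (m - jn)) false := by
  rw [show peakWord m = true :: List.replicate m false from rfl, List.replicate_add]
  simp [List.append_assoc]

lemma star_form (m : ℕ) (P u w : List Bool) (jn : ℕ) :
    star m (P ++ (u ++ peakWord m) ++ List.replicate (m - jn) false) w
      = P ++ u ++ w ++ List.replicate (m - jn) false := by
  rw [assemble P u m jn, star_eval m _ w _ (by omega)]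
  rw [show m + (m - jn) - m = m - jn from by omega]

end PF


open PF

/-- If `v = D(v₁,…,v_{j−1}, v_j, ∅,…,∅)` with `v_j ≠ ∅`, then `v`
can be written in a unique way as `v = v' * v''` with `v'` of the form
`D(v'₁,…,v'_{j−1}, v'_j·1·0^m, ∅,…,∅)` (the `v'_k` possibly empty `m`-Dyck words) and
`v''` a prime `m`-Dyck word.  (Components are indexed by `Fin (m+1)`, the nonempty
component of `v` being at position `j`.) -/
theorem unique_prime_factorisation (m : ℕ) (hm : 1 ≤ m)
    (j : Fin (m + 1)) (ws : Fin (m + 1) → List Bool)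
    (hdyck : ∀ k, IsDyck m (ws k)) (hne : ws j ≠ [])
    (hempty : ∀ k : Fin (m + 1), j < k → ws k = []) :
    ∃! p : List Bool × List Bool,
      (∃ ws' : Fin (m + 1) → List Bool, (∀ k, IsDyck m (ws' k)) ∧
          (∀ k : Fin (m + 1), j < k → ws' k = []) ∧
          (∃ u : List Bool, IsDyck m u ∧ ws' j = u ++ peakWord m) ∧
          p.1 = Dpath m ws') ∧
      IsPrimePath m p.2 ∧
      Dpath m ws = star m p.1 p.2 := by
  classical
  have hj : j.val ≤ m := Nat.lt_succ_iff.mp j.2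
  obtain ⟨u, p, hu, hp, hsplit⟩ := prime_split m (hdyck j) hne
  set ws' : Fin (m+1) → List Bool := fun k => if k = j then u ++ peakWord m else ws k with hws'def
  have hws'j : ws' j = u ++ peakWord m := by simp [hws'def]
  have hws'dyck : ∀ k, IsDyck m (ws' k) := by
    intro k
    rw [hws'def]
    dsimp only
    split
    · exact dyck_append hu (dyck_peak m)
    · exact hdyck k
  have hws'empty : ∀ k : Fin (m + 1), j < k → ws' k = [] := by
    intro k hk
    rw [hws'def]
    dsimp only
    rw [if_neg (by intro h; subst h; exact lt_irrefl _ hk)]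
    exact hempty k hk
  have hpre_congr : preD m ws' j.val = preD m ws j.val :=
    preD_congr m ws' ws hj (fun k hk => by
      rw [hws'def]; dsimp only
      rw [if_neg (by intro h; subst h; omega)])
  have hdecomp : Dpath m ws = preD m ws j.val ++ ws j ++ List.replicate (m - j.val) false :=
    Dpath_decomp m j ws hempty
  have hdecomp' : Dpath m ws' =
      preD m ws j.val ++ (u ++ peakWord m) ++ List.replicate (m - j.val) false := by
    rw [Dpath_decomp m j ws' hws'empty, hws'j, hpre_congr]
  have heqn : Dpath m ws = star m (Dpath m ws') p := by
    rw [hdecomp', star_form, hdecomp, hsplit]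
    simp [List.append_assoc]
  refine ⟨(Dpath m ws', p), ⟨⟨ws', hws'dyck, hws'empty, ⟨u, hu, hws'j⟩, rfl⟩, hp, heqn⟩, ?_⟩
  rintro ⟨v₁, v₂⟩ ⟨⟨ws₁, hws₁dyck, hws₁empty, ⟨u₁, hu₁, hws₁j⟩, hv₁⟩, hv₂prime, heq₁⟩
  dsimp only at hv₁ hws₁j heq₁ hv₂prime
  have hdecomp₁ : v₁ = preD m ws₁ j.val ++ (u₁ ++ peakWord m) ++ List.replicate (m - j.val) false := by
    rw [hv₁, Dpath_decomp m j ws₁ hws₁empty, hws₁j]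
  rw [hdecomp₁, star_form, hdecomp] at heq₁
  -- cancel the right replicate
  have heq₂ : preD m ws j.val ++ ws j = preD m ws₁ j.val ++ (u₁ ++ v₂) := by
    apply List.append_cancel_right (bs := List.replicate (m - j.val) false)
    simpa [List.append_assoc] using heq₁
  obtain ⟨hPeq, hXeq⟩ := cancel_pre m heq₂ (preD_ne m ws j.val) (preD_ne m ws₁ j.val)
    (preD_count m ws hdyck hj) (preD_count m ws₁ hws₁dyck hj)
    (preD_strict m ws hdyck hj) (preD_strict m ws₁ hws₁dyck hj)
  have hup : u ++ p = u₁ ++ v₂ := by rw [← hsplit]; exact hXeq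
  obtain ⟨hueq, hpeq⟩ := prime_split_unique m hup hu hu₁ hp hv₂prime
  have hv₁eq : v₁ = Dpath m ws' := by
    rw [hdecomp₁, hdecomp', hPeq, hueq]
  exact Prod.ext hv₁eq hpeq.symm
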